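/- arXiv:2501.15540 — 2 statements merged into one kernel-verified Lean document; each statement's English description precedes it below -/
import Mathlib

section
/- Let A : ℝⁿ → Set ℝⁿ be partly smooth at x̄ relative to a manifold M given by a C^p patch through x̄, r-resolvent-regular at x̄ for ū ∈ A(x̄), and assume the strong inclusion (non-degeneracy) condition ū ∈ ri(A(x̄)). Then for every γ ∈ (0, 1/r) there exists ε̄ > 0 such that for every ε ∈ (0, ε̄), the point z̄ = x̄ + γū lies in the topological interior of the local union U_{γ,ε}. -/
open Filter Topology Set RealInnerProductSpace

noncomputable section

/-- A set-valued operator `A` is upper semicontinuous: whenever `x k → x₀`,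
`u k ∈ A (x k)` for all `k`, and `u k → u₀`, then `u₀ ∈ A x₀`. -/
def UpperSC {E : Type*} [NormedAddCommGroup E] [InnerProductSpace ℝ E]
    (A : E → Set E) : Prop :=
  ∀ (x u : ℕ → E) (x₀ u₀ : E),
    Tendsto x atTop (𝓝 x₀) → (∀ k, u k ∈ A (x k)) → Tendsto u atTop (𝓝 u₀) →
      u₀ ∈ A x₀

/-- `A` is lower semicontinuous along `S` at `x₀ ∈ S`. -/
def LowerSCAlongAt {E : Type*} [NormedAddCommGroup E] [InnerProductSpace ℝ E]
    (A : E → Set E) (S : Set E) (x₀ : E) : Prop :=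
  ∀ u₀ ∈ A x₀, ∀ x : ℕ → E, (∀ k, x k ∈ S) → Tendsto x atTop (𝓝 x₀) →
    ∃ u : ℕ → E, (∀ k, u k ∈ A (x k)) ∧ Tendsto u atTop (𝓝 u₀)

/-- `A` is continuous along `S` near `xbar`: lower semicontinuous along `S` at every
point of `S` in some neighborhood of `xbar`. -/
def ContinuousAlongNear {E : Type*} [NormedAddCommGroup E] [InnerProductSpace ℝ E]
    (A : E → Set E) (S : Set E) (xbar : E) : Prop :=
  ∃ W ∈ 𝓝 xbar, ∀ x ∈ S ∩ W, LowerSCAlongAt A S x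

/-- A `C^p` patch (local parametrization) of a manifold `M ⊆ E` through `xbar`,
with parameter domain `F` (playing the role of `ℝ^d`). -/
structure CpPatch (p : ℕ∞) (F : Type*) [NormedAddCommGroup F] [InnerProductSpace ℝ F]
    {E : Type*} [NormedAddCommGroup E] [InnerProductSpace ℝ E]
    (M : Set E) (xbar : E) where
  V : Set F
  toFun : F → E
  isOpen_V : IsOpen V
  zero_mem : (0 : F) ∈ V
  contDiffOn : ContDiffOn ℝ p toFun V
  injOn : Set.InjOn toFun V
  fderiv_injective : ∀ t ∈ V, Function.Injective (fderiv ℝ toFun t)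
  map_zero : toFun 0 = xbar
  image_eq : M = toFun '' V

namespace CpPatch

variable {p : ℕ∞} {F : Type*} [NormedAddCommGroup F] [InnerProductSpace ℝ F]
  {E : Type*} [NormedAddCommGroup E] [InnerProductSpace ℝ E] {M : Set E} {xbar : E}

/-- The tangent space `T_M(x) = range (Dφ(t))` where `x = φ(t)`, `t ∈ V`. -/
def tangent (P : CpPatch p F M xbar) (x : E) : Submodule ℝ E :=
  haveI : Nonempty F := ⟨0⟩
  LinearMap.range (fderiv ℝ P.toFun (Function.invFunOn P.toFun P.V x) : F →ₗ[ℝ] E)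

/-- The normal space `N_M(x) = (T_M(x))ᗮ`. -/
def normal (P : CpPatch p F M xbar) (x : E) : Submodule ℝ E :=
  (P.tangent x)ᗮ

end CpPatch

/-- `Lin S`: the direction of the affine span of `S`. -/
def Lin {E : Type*} [NormedAddCommGroup E] [InnerProductSpace ℝ E] (S : Set E) :
    Submodule ℝ E :=
  (affineSpan ℝ S).direction

/-- `A` is partly smooth at `xbar` relative to `M` (given by the `C^p` patch `P`). -/
def PartlySmoothAt {p : ℕ∞} {F : Type*} [NormedAddCommGroup F] [InnerProductSpace ℝ F]
    {E : Type*} [NormedAddCommGroup E] [InnerProductSpace ℝ E] [FiniteDimensional ℝ E]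
    (A : E → Set E) (M : Set E) (xbar : E) (P : CpPatch p F M xbar) : Prop :=
  UpperSC A ∧
  -- Regularity
  (∃ W ∈ 𝓝 xbar, ∀ x ∈ W, (A x).Nonempty ∧ IsClosed (A x) ∧ Convex ℝ (A x)) ∧
  -- Sharpness
  P.normal xbar = Lin (A xbar) ∧
  (∃ η : E → E, ∃ W ∈ 𝓝 xbar, ContinuousOn η (M ∩ W) ∧
    ∀ x ∈ M ∩ W,
      (fun v => ((P.tangent x).orthogonalProjectionOnto v : E)) '' A x = {η x}) ∧
  -- Continuity
  ContinuousAlongNear A M xbar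

/-- The `ε`-localization of `A` around `(xbar, ubar)`. -/
def Locz {E : Type*} [NormedAddCommGroup E] [InnerProductSpace ℝ E]
    (A : E → Set E) (xbar ubar : E) (ε : ℝ) (x : E) : Set E :=
  if ‖x - xbar‖ < ε then {u ∈ A x | ‖u - ubar‖ < ε} else ∅

/-- `A` is `r`-resolvent-regular at `xbar` for `ubar`, with constants `r > 0`, `ε > 0`. -/
def ResolventRegular {E : Type*} [NormedAddCommGroup E] [InnerProductSpace ℝ E]
    (A : E → Set E) (xbar ubar : E) (r ε : ℝ) : Prop :=
  0 < r ∧ 0 < ε ∧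
  (∀ x y u v : E, u ∈ Locz A xbar ubar ε x → v ∈ Locz A xbar ubar ε y →
    (inner ℝ (x - y) (u - v) : ℝ) ≥ -r * ‖x - y‖ ^ 2) ∧
  (∀ γ : ℝ, 0 < γ → γ < 1 / r →
    ∃ W ∈ 𝓝 (xbar + γ • ubar), ∃ J : E → E, ContinuousOn J W ∧
      ∀ z ∈ W, ∀ x : E,
        (∃ u ∈ Locz A xbar ubar ε x, z = x + γ • u) ↔ x = J z)

/-- The local union `U_{γ,ε} = ⋃_{x ∈ M, ‖x-x̄‖<ε} (x + γ A_ε(x))`. -/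
def LocalUnion {E : Type*} [NormedAddCommGroup E] [InnerProductSpace ℝ E]
    (A : E → Set E) (M : Set E) (xbar ubar : E) (γ ε : ℝ) : Set E :=
  {z | ∃ x ∈ M, ‖x - xbar‖ < ε ∧ ∃ u ∈ Locz A xbar ubar ε x, z = x + γ • u}


set_option maxHeartbeats 1000000

lemma ri_ball {E : Type*} [NormedAddCommGroup E] [InnerProductSpace ℝ E]
    {s : Set E} {u : E} (h : u ∈ intrinsicInterior ℝ s) :
    ∃ ρ > 0, ∀ v : E, v - u ∈ (affineSpan ℝ s).direction → ‖v - u‖ ≤ ρ → v ∈ s := by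
  obtain ⟨u', hu', rfl⟩ := h
  obtain ⟨ρ, hρ, hball⟩ := Metric.isOpen_iff.1 isOpen_interior u' (by exact hu')
  refine ⟨ρ/2, by positivity, fun v hv hnv => ?_⟩
  have hvspan : v ∈ affineSpan ℝ s := by
    have := AffineSubspace.vadd_mem_of_mem_direction hv u'.2
    simpa [vsub_eq_sub, sub_add_cancel] using this
  have : (⟨v, hvspan⟩ : affineSpan ℝ s) ∈ Metric.ball u' ρ := by
    rw [Metric.mem_ball, Subtype.dist_eq]
    simp only [dist_eq_norm]
    linarith
  have := interior_subset (hball this)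
  simpa using this

lemma proj_norm_le {E : Type*} [NormedAddCommGroup E] [InnerProductSpace ℝ E]
    (K : Submodule ℝ E) [CompleteSpace K] (v : E) :
    ‖(Submodule.orthogonalProjectionOnto K v : E)‖ ≤ ‖v‖ := by
  calc ‖(Submodule.orthogonalProjectionOnto K v : E)‖ ≤ ‖Submodule.orthogonalProjectionOnto K‖ * ‖v‖ :=
        (Submodule.orthogonalProjectionOnto K).le_opNorm v
    _ ≤ 1 * ‖v‖ := by
        have := Submodule.orthogonalProjectionOnto_norm_le K
        exact mul_le_mul_of_nonneg_right this (norm_nonneg v)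
    _ = ‖v‖ := one_mul _

lemma mem_orthogonal_of_proj_zero {E : Type*} [NormedAddCommGroup E] [InnerProductSpace ℝ E]
    (K : Submodule ℝ E) [CompleteSpace K] {v : E}
    (h : (Submodule.orthogonalProjectionOnto K v : E) = 0) : v ∈ Kᗮ := by
  exact Submodule.orthogonalProjectionOnto_eq_zero_iff.mp (by exact_mod_cast h)

lemma chain_aux {E' : Type*} [NormedAddCommGroup E'] [InnerProductSpace ℝ E']
    (Q Ps B U Pr W : E') (δ' nrm : ℝ)
    (hch : (inner ℝ (Q - Ps) (B - Ps) : ℝ) ≤ 0) (hQ : Q = U + Pr + W)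
    (hPr : ‖Pr‖ ≤ nrm) (hW : ‖W‖ ≤ δ') (hne : Q - Ps ≠ 0) :
    (inner ℝ (‖Q - Ps‖⁻¹ • (Q - Ps)) (B - U) : ℝ) - nrm ≤ δ' := by
  have hn : 0 < ‖Q - Ps‖ := norm_pos_iff.2 hne
  have e1 : (inner ℝ (Q - Ps) B : ℝ) ≤ inner ℝ (Q - Ps) Ps := by
    rw [inner_sub_right] at hch; linarith
  have e2 : (inner ℝ (Q - Ps) Ps : ℝ) ≤ inner ℝ (Q - Ps) Q := by
    have h3 : (0:ℝ) ≤ inner ℝ (Q - Ps) (Q - Ps) := real_inner_self_nonneg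
    rw [inner_sub_right] at h3; linarith
  have e4 : (inner ℝ (Q - Ps) Q : ℝ) =
      inner ℝ (Q - Ps) U + inner ℝ (Q - Ps) Pr + inner ℝ (Q - Ps) W := by
    rw [hQ, inner_add_right, inner_add_right]
  have b1 : (inner ℝ (Q - Ps) Pr : ℝ) ≤ ‖Q - Ps‖ * nrm :=
    le_trans (real_inner_le_norm _ _) (mul_le_mul_of_nonneg_left hPr (norm_nonneg _))
  have b2 : (inner ℝ (Q - Ps) W : ℝ) ≤ ‖Q - Ps‖ * δ' :=
    le_trans (real_inner_le_norm _ _) (mul_le_mul_of_nonneg_left hW (norm_nonneg _))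
  have e5 : (inner ℝ (Q - Ps) (B - U) : ℝ) ≤ ‖Q - Ps‖ * (nrm + δ') := by
    rw [inner_sub_right]
    have := e1.trans (e2.trans_eq e4)
    nlinarith
  have e6 : (inner ℝ (‖Q - Ps‖⁻¹ • (Q - Ps)) (B - U) : ℝ) = ‖Q - Ps‖⁻¹ * inner ℝ (Q - Ps) (B - U) :=
    real_inner_smul_left _ _ _
  rw [e6]
  have e7 : ‖Q - Ps‖⁻¹ * (inner ℝ (Q - Ps) (B - U) : ℝ) ≤ ‖Q - Ps‖⁻¹ * (‖Q - Ps‖ * (nrm + δ')) :=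
    mul_le_mul_of_nonneg_left e5 (inv_nonneg.2 (norm_nonneg _))
  rw [← mul_assoc, inv_mul_cancel₀ (ne_of_gt hn), one_mul] at e7
  linarith

theorem identification {n d : ℕ} {p : ℕ∞} (hp : 1 ≤ p)
    (A : EuclideanSpace ℝ (Fin n) → Set (EuclideanSpace ℝ (Fin n))) (M : Set (EuclideanSpace ℝ (Fin n))) (xbar ubar : EuclideanSpace ℝ (Fin n))
    (P : CpPatch p (EuclideanSpace ℝ (Fin d)) M xbar)
    (hA : PartlySmoothAt A M xbar P)
    (hubar : ubar ∈ A xbar) (r ε₀ : ℝ) (hr : 0 < r) (hε₀ : 0 < ε₀)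
    (hmono : ∀ x y u v : EuclideanSpace ℝ (Fin n), u ∈ Locz A xbar ubar ε₀ x → v ∈ Locz A xbar ubar ε₀ y →
      (inner ℝ (x - y) (u - v) : ℝ) ≥ -r * ‖x - y‖ ^ 2)
    (hri : ubar ∈ intrinsicInterior ℝ (A xbar)) :
    ∃ ζ > 0, ∀ x u : EuclideanSpace ℝ (Fin n), u ∈ A x → ‖x - xbar‖ < ζ → ‖u - ubar‖ < ζ → x ∈ M := by
  classical
  have hp' : (1 : WithTop ℕ∞) ≤ (p : WithTop ℕ∞) := by exact_mod_cast hp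
  haveI : Nonempty (EuclideanSpace ℝ (Fin d)) := ⟨0⟩
  obtain ⟨husc, ⟨Wreg, hWreg, hreg⟩, hsharp, ⟨η, Wη, hWη, hηc, hηeq⟩, ⟨Wc, hWc, hlsc⟩⟩ := hA
  set φ := P.toFun with hφdef
  have hφ0 : φ 0 = xbar := P.map_zero
  have hxbarM : xbar ∈ M := by
    rw [P.image_eq]; exact ⟨0, P.zero_mem, P.map_zero⟩
  -- tangent space identification on the chart
  have htanEq : ∀ t ∈ P.V, P.tangent (φ t) = LinearMap.range (fderiv ℝ φ t : EuclideanSpace ℝ (Fin d) →ₗ[ℝ] EuclideanSpace ℝ (Fin n)) := by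
    intro t ht
    have h1 : Function.invFunOn φ P.V (φ t) = t :=
      P.injOn (Function.invFunOn_mem ⟨t, ht, rfl⟩) ht (Function.invFunOn_eq ⟨t, ht, rfl⟩)
    simp only [CpPatch.tangent, ← hφdef, h1]
  -- differentiability
  have hdiff : ∀ t ∈ P.V, HasFDerivAt φ (fderiv ℝ φ t) t := fun t ht =>
    ((P.contDiffOn.contDiffAt (P.isOpen_V.mem_nhds ht)).differentiableAt (ne_of_gt (lt_of_lt_of_le zero_lt_one hp'))).hasFDerivAt
  have hfc : ContinuousOn (fderiv ℝ φ) P.V :=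
    P.contDiffOn.continuousOn_fderiv_of_isOpen P.isOpen_V hp'
  set D0 : EuclideanSpace ℝ (Fin d) →L[ℝ] EuclideanSpace ℝ (Fin n) := fderiv ℝ φ 0 with hD0
  -- antilipschitz constant for D0
  have hker : LinearMap.ker (D0 : EuclideanSpace ℝ (Fin d) →ₗ[ℝ] EuclideanSpace ℝ (Fin n)) = ⊥ :=
    LinearMap.ker_eq_bot.2 (P.fderiv_injective 0 P.zero_mem)
  obtain ⟨K, hK0, hKa⟩ := LinearMap.exists_antilipschitzWith _ hker
  set c : ℝ := ((2 : ℝ) * K)⁻¹ with hc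
  have hKpos : (0:ℝ) < (K:ℝ) := hK0
  have hc0 : 0 < c := by positivity
  have hD0low : ∀ v : EuclideanSpace ℝ (Fin d), 2 * c * ‖v‖ ≤ ‖D0 v‖ := by
    intro v
    have h1 : ‖v‖ ≤ (K:ℝ) * ‖D0 v‖ := by
      have := hKa.le_mul_dist v 0
      simpa [dist_eq_norm] using this
    have h2 : (2 * c) = (K:ℝ)⁻¹ := by
      rw [hc]; field_simp
    rw [h2, ← div_eq_inv_mul, div_le_iff₀ hKpos]
    linarith [h1]
  -- radius with derivative control
  have hCA : ContinuousAt (fderiv ℝ φ) 0 := hfc.continuousAt (P.isOpen_V.mem_nhds P.zero_mem)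
  have hev : ∀ᶠ t in 𝓝 (0 : EuclideanSpace ℝ (Fin d)),
      ‖fderiv ℝ φ t - D0‖ ≤ c ∧ t ∈ P.V := by
    have h1 : ∀ᶠ t in 𝓝 (0 : EuclideanSpace ℝ (Fin d)), fderiv ℝ φ t ∈ Metric.closedBall D0 c :=
      hCA.eventually_mem (Metric.closedBall_mem_nhds D0 hc0)
    have h2 : ∀ᶠ t in 𝓝 (0 : EuclideanSpace ℝ (Fin d)), t ∈ P.V :=
      P.isOpen_V.mem_nhds P.zero_mem
    filter_upwards [h1, h2] with t ht1 ht2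
    exact ⟨by simpa [dist_eq_norm] using ht1, ht2⟩
  obtain ⟨ρ₁, hρ₁0, hρ₁⟩ := Metric.eventually_nhds_iff_ball.1 hev
  set ρ₀ : ℝ := ρ₁ / 2 with hρ₀def
  have hρ₀0 : 0 < ρ₀ := by positivity
  have hsubV : Metric.closedBall (0 : EuclideanSpace ℝ (Fin d)) ρ₀ ⊆ P.V := by
    intro t ht
    have : t ∈ Metric.ball (0 : EuclideanSpace ℝ (Fin d)) ρ₁ := by
      rw [Metric.mem_closedBall] at ht; rw [Metric.mem_ball]; linarith
    exact (hρ₁ t this).2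
  have hbnd : ∀ t ∈ Metric.closedBall (0 : EuclideanSpace ℝ (Fin d)) ρ₀,
      ‖fderiv ℝ φ t - D0‖ ≤ c := by
    intro t ht
    have : t ∈ Metric.ball (0 : EuclideanSpace ℝ (Fin d)) ρ₁ := by
      rw [Metric.mem_closedBall] at ht; rw [Metric.mem_ball]; linarith
    exact (hρ₁ t this).1
  -- lower bound for the chart map
  have hlow : ∀ t ∈ Metric.closedBall (0 : EuclideanSpace ℝ (Fin d)) ρ₀,
      ∀ s ∈ Metric.closedBall (0 : EuclideanSpace ℝ (Fin d)) ρ₀,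
      c * ‖s - t‖ ≤ ‖φ s - φ t‖ := by
    intro t ht s hs
    have hMVT := Convex.norm_image_sub_le_of_norm_hasFDerivWithin_le'
      (f := φ) (f' := fderiv ℝ φ) (φ := D0) (C := c)
      (fun x hx => (hdiff x (hsubV hx)).hasFDerivWithinAt) hbnd
      (convex_closedBall _ _) ht hs
    have h1 := hD0low (s - t)
    have h2 : ‖D0 (s - t)‖ - ‖φ s - φ t‖ ≤ c * ‖s - t‖ := by
      have := norm_sub_norm_le (D0 (s - t)) (φ s - φ t)
      have h3 : ‖D0 (s - t) - (φ s - φ t)‖ ≤ c * ‖s - t‖ := by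
        rw [← norm_neg]; simpa [neg_sub] using hMVT
      linarith [norm_sub_norm_le (D0 (s-t)) (φ s - φ t), h3]
    nlinarith [norm_nonneg (s - t)]
  -- relative interior ball
  obtain ⟨ρ', hρ'0, hball⟩ := ri_ball hri
  set ρ : ℝ := min ρ' (ε₀ / 2) with hρdef
  have hρ0 : 0 < ρ := lt_min hρ'0 (by positivity)
  set δ : ℝ := ρ / 2 with hδdef
  have hδ0 : 0 < δ := by positivity
  -- contradiction setup
  by_contra hcon
  push_neg at hcon
  have hseq : ∀ k : ℕ, ∃ xu : EuclideanSpace ℝ (Fin n) × EuclideanSpace ℝ (Fin n),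
      xu.2 ∈ A xu.1 ∧ ‖xu.1 - xbar‖ < 1 / (k + 1) ∧ ‖xu.2 - ubar‖ < 1 / (k + 1) ∧ xu.1 ∉ M := by
    intro k
    obtain ⟨x, u, h1, h2, h3, h4⟩ := hcon (1 / (k + 1)) (by positivity)
    exact ⟨(x, u), h1, h2, h3, h4⟩
  choose xu hxuA hxud hxuu hxuM using hseq
  set xs : ℕ → EuclideanSpace ℝ (Fin n) := fun k => (xu k).1 with hxs
  set us : ℕ → EuclideanSpace ℝ (Fin n) := fun k => (xu k).2 with hus
  have hxn : Tendsto (fun k => ‖xs k - xbar‖) atTop (𝓝 0) := by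
    apply tendsto_of_tendsto_of_tendsto_of_le_of_le
      (tendsto_const_nhds) (tendsto_one_div_add_atTop_nhds_zero_nat)
      (fun k => norm_nonneg _) (fun k => (hxud k).le)
  have hun : Tendsto (fun k => ‖us k - ubar‖) atTop (𝓝 0) := by
    apply tendsto_of_tendsto_of_tendsto_of_le_of_le
      (tendsto_const_nhds) (tendsto_one_div_add_atTop_nhds_zero_nat)
      (fun k => norm_nonneg _) (fun k => (hxuu k).le)
  have hxst : Tendsto xs atTop (𝓝 xbar) := by
    rw [tendsto_iff_norm_sub_tendsto_zero]; exact hxn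
  -- nearest chart points
  have hexmin : ∀ k, ∃ t ∈ Metric.closedBall (0 : EuclideanSpace ℝ (Fin d)) ρ₀,
      IsMinOn (fun s => ‖xs k - φ s‖) (Metric.closedBall 0 ρ₀) t := by
    intro k
    apply (isCompact_closedBall _ _).exists_isMinOn
      ⟨0, Metric.mem_closedBall_self hρ₀0.le⟩
    exact (continuousOn_const.sub (P.contDiffOn.continuousOn.mono hsubV)).norm
  choose ts hts htm using hexmin
  set ys : ℕ → EuclideanSpace ℝ (Fin n) := fun k => φ (ts k) with hys
  set Dk : ℕ → ℝ := fun k => ‖xs k - ys k‖ with hDk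
  have hD_le : ∀ k, Dk k ≤ ‖xs k - xbar‖ := by
    intro k
    have := isMinOn_iff.1 (htm k) 0 (Metric.mem_closedBall_self hρ₀0.le)
    rw [hφ0] at this
    exact this
  have hy_le : ∀ k, ‖ys k - xbar‖ ≤ 2 * ‖xs k - xbar‖ := by
    intro k
    have h1 : ys k - xbar = (ys k - xs k) + (xs k - xbar) := by abel
    rw [h1]
    have := norm_add_le (ys k - xs k) (xs k - xbar)
    have h2 : ‖ys k - xs k‖ = Dk k := by rw [norm_sub_rev]
    linarith [hD_le k]
  have hyn : Tendsto (fun k => ‖ys k - xbar‖) atTop (𝓝 0) := by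
    have h2t : Tendsto (fun k => 2 * ‖xs k - xbar‖) atTop (𝓝 0) := by
      have := hxn.const_mul (2:ℝ); rw [mul_zero] at this; exact this
    exact tendsto_of_tendsto_of_tendsto_of_le_of_le (tendsto_const_nhds)
      h2t (fun k => norm_nonneg _) hy_le
  have hyst : Tendsto ys atTop (𝓝 xbar) := by
    rw [tendsto_iff_norm_sub_tendsto_zero]; exact hyn
  have htsn : Tendsto (fun k => ‖ts k‖) atTop (𝓝 0) := by
    have h2t : Tendsto (fun k => (1/c) * ‖ys k - xbar‖) atTop (𝓝 0) := by
      have := hyn.const_mul (1/c); rw [mul_zero] at this; exact this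
    refine tendsto_of_tendsto_of_tendsto_of_le_of_le (tendsto_const_nhds)
      h2t (fun k => norm_nonneg _) (fun k => ?_)
    have h1 := hlow 0 (Metric.mem_closedBall_self hρ₀0.le) (ts k) (hts k)
    rw [hφ0] at h1
    simp only [sub_zero] at h1
    rw [one_div, ← div_eq_inv_mul, le_div_iff₀ hc0]
    calc ‖ts k‖ * c = c * ‖ts k‖ := mul_comm _ _
      _ ≤ ‖φ (ts k) - xbar‖ := h1
      _ = ‖ys k - xbar‖ := rfl
  have hts0 : Tendsto ts atTop (𝓝 0) := by
    rw [tendsto_iff_norm_sub_tendsto_zero]; simpa using htsn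
  have hysM : ∀ k, ys k ∈ M := by
    intro k; rw [P.image_eq]; exact ⟨ts k, hsubV (hts k), rfl⟩
  have hDpos : ∀ k, 0 < Dk k := by
    intro k
    rw [hDk]
    simp only [norm_pos_iff, ne_eq, sub_eq_zero]
    intro h
    exact hxuM k (by rw [show (xu k).1 = ys k from h]; exact hysM k)
  -- lsc selections toward ubar
  have hlscx : LowerSCAlongAt A M xbar := hlsc xbar ⟨hxbarM, mem_of_mem_nhds hWc⟩
  obtain ⟨as, hasA, hasT⟩ := hlscx ubar hubar ys hysM hyst
  have hasn : Tendsto (fun k => ‖as k - ubar‖) atTop (𝓝 0) := by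
    rw [← tendsto_iff_norm_sub_tendsto_zero]; exact hasT
  -- normal displacement
  set w : ℕ → EuclideanSpace ℝ (Fin n) := fun k => (δ / Dk k) • (xs k - ys k) with hw
  have hwnorm : ∀ k, ‖w k‖ = δ := by
    intro k
    rw [hw]
    rw [norm_smul, Real.norm_eq_abs, abs_of_pos (div_pos hδ0 (hDpos k)),
      div_mul_eq_mul_div]
    rw [mul_div_assoc, div_self (ne_of_gt (hDpos k)), mul_one]
  -- first order optimality: orthogonality
  have horth : ∀ k, ‖ts k‖ < ρ₀ → ∀ v : EuclideanSpace ℝ (Fin d),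
      (inner ℝ (xs k - ys k) (fderiv ℝ φ (ts k) v) : ℝ) = 0 := by
    intro k hk v
    have hmin2 : IsMinOn (fun s => (inner ℝ (xs k - φ s) (xs k - φ s) : ℝ))
        (Metric.closedBall 0 ρ₀) (ts k) := by
      intro y hy
      simp only [Set.mem_setOf_eq, real_inner_self_eq_norm_sq]
      have := isMinOn_iff.1 (htm k) y hy
      have h0 : (0:ℝ) ≤ ‖xs k - φ (ts k)‖ := norm_nonneg _
      nlinarith
    have hloc : IsLocalMin (fun s => (inner ℝ (xs k - φ s) (xs k - φ s) : ℝ)) (ts k) :=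
      hmin2.isLocalMin (Metric.closedBall_mem_nhds_of_mem (by simpa using hk))
    have hder : HasFDerivAt (fun s => (inner ℝ (xs k - φ s) (xs k - φ s) : ℝ))
        ((fderivInnerCLM ℝ (xs k - φ (ts k), xs k - φ (ts k))).comp
          (((0 : _ →L[ℝ] _) - fderiv ℝ φ (ts k)).prod ((0 : _ →L[ℝ] _) - fderiv ℝ φ (ts k)))) (ts k) := by
      have hφd := hdiff (ts k) (hsubV (hts k))
      have h1 : HasFDerivAt (fun s => xs k - φ s) ((0 : _ →L[ℝ] _) - fderiv ℝ φ (ts k)) (ts k) :=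
        (hasFDerivAt_const (xs k) (ts k)).sub hφd
      exact h1.inner ℝ h1
    have hzero := hloc.hasFDerivAt_eq_zero hder
    have := congrFun (congrArg DFunLike.coe hzero) v
    simp only [ContinuousLinearMap.comp_apply, ContinuousLinearMap.prod_apply,
      ContinuousLinearMap.sub_apply, ContinuousLinearMap.zero_apply,
      fderivInnerCLM_apply, ContinuousLinearMap.zero_apply] at this
    have h2 : (inner ℝ (xs k - ys k) (0 - fderiv ℝ φ (ts k) v) : ℝ) +
        (inner ℝ (0 - fderiv ℝ φ (ts k) v) (xs k - ys k) : ℝ) = 0 := this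
    rw [real_inner_comm (0 - fderiv ℝ φ (ts k) v) (xs k - ys k)] at h2
    have h3 : (inner ℝ (xs k - ys k) (0 - fderiv ℝ φ (ts k) v) : ℝ) = 0 := by linarith
    rw [zero_sub, inner_neg_right] at h3
    linarith
    -- pointwise normal membership of w
  have hw_orth : ∀ k, ‖ts k‖ < ρ₀ → w k ∈ (P.tangent (ys k))ᗮ := by
    intro k hk
    rw [htanEq (ts k) (hsubV (hts k)), Submodule.mem_orthogonal]
    rintro u ⟨v, rfl⟩
    rw [hw, real_inner_smul_right, real_inner_comm]
    rw [ContinuousLinearMap.coe_coe, horth k hk v, mul_zero]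
  -- pointwise sharpness
  have hηpt : ∀ k, ys k ∈ Wη → ∀ a ∈ A (ys k),
      (Submodule.orthogonalProjectionOnto (P.tangent (ys k)) a : EuclideanSpace ℝ (Fin n)) = η (ys k) := by
    intro k hk a ha
    have himg := hηeq (ys k) ⟨hysM k, hk⟩
    have hmem : (Submodule.orthogonalProjectionOnto (P.tangent (ys k)) a : EuclideanSpace ℝ (Fin n)) ∈
        (fun v => (Submodule.orthogonalProjectionOnto (P.tangent (ys k)) v : EuclideanSpace ℝ (Fin n))) '' A (ys k) :=
      ⟨a, ha, rfl⟩
    rw [himg] at hmem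
    exact hmem
  -- candidate points
  set q : ℕ → EuclideanSpace ℝ (Fin n) := fun k =>
    ubar + (Submodule.orthogonalProjectionOnto (P.tangent (ys k)) (as k - ubar) : EuclideanSpace ℝ (Fin n)) + w k
    with hqdef
  -- eventual smallness facts
  have hevlt : ∀ (f : ℕ → ℝ), Tendsto f atTop (𝓝 0) → ∀ a : ℝ, 0 < a →
      ∀ᶠ k in atTop, f k < a := by
    intro f hf a ha
    filter_upwards [hf (Iio_mem_nhds ha)] with k hk
    exact hk
  have hDt : Tendsto Dk atTop (𝓝 0) :=
    tendsto_of_tendsto_of_tendsto_of_le_of_le tendsto_const_nhds hxn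
      (fun k => norm_nonneg _) hD_le
  have htsρ : ∀ᶠ k in atTop, ‖ts k‖ < ρ₀ := hevlt _ htsn _ hρ₀0
  have hxε : ∀ᶠ k in atTop, ‖xs k - xbar‖ < ε₀ := hevlt _ hxn _ hε₀
  have huε : ∀ᶠ k in atTop, ‖us k - ubar‖ < ε₀ := hevlt _ hun _ hε₀
  have hyε : ∀ᶠ k in atTop, ‖ys k - xbar‖ < ε₀ := hevlt _ hyn _ hε₀
  have hasε : ∀ᶠ k in atTop, ‖as k - ubar‖ < ε₀ / 2 := hevlt _ hasn _ (by positivity)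
  have hδε : δ ≤ ε₀ / 4 := by
    rw [hδdef, hρdef]
    have := min_le_right ρ' (ε₀ / 2)
    linarith
  have hqnorm : ∀ k, ‖q k - ubar‖ ≤ ‖as k - ubar‖ + δ := by
    intro k
    have h1 : q k - ubar =
        (Submodule.orthogonalProjectionOnto (P.tangent (ys k)) (as k - ubar) : EuclideanSpace ℝ (Fin n)) + w k := by
      rw [hqdef]; simp only [add_assoc, add_sub_cancel_left]
    rw [h1]
    calc ‖(Submodule.orthogonalProjectionOnto (P.tangent (ys k)) (as k - ubar) : EuclideanSpace ℝ (Fin n)) + w k‖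
        ≤ ‖(Submodule.orthogonalProjectionOnto (P.tangent (ys k)) (as k - ubar) : EuclideanSpace ℝ (Fin n))‖ + ‖w k‖ :=
          norm_add_le _ _
      _ ≤ ‖as k - ubar‖ + δ := by
          have := proj_norm_le (P.tangent (ys k)) (as k - ubar)
          rw [hwnorm k]
          linarith
  by_cases hqev : ∀ᶠ k in atTop, q k ∈ A (ys k)
  · -- Branch 1 : hypomonotonicity contradiction
    have hkey : ∀ᶠ k in atTop, δ ≤ ‖us k - ubar‖ + ‖as k - ubar‖ + r * Dk k := by
      filter_upwards [hqev, htsρ, hxε, huε, hyε, hasε] with k hqA hkts hkx hku hky hkas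
      have huloc : us k ∈ Locz A xbar ubar ε₀ (xs k) := by
        rw [Locz, if_pos hkx]; exact ⟨hxuA k, hku⟩
      have hqloc : q k ∈ Locz A xbar ubar ε₀ (ys k) := by
        rw [Locz, if_pos hky]
        refine ⟨hqA, ?_⟩
        have := hqnorm k
        linarith
      have hmono' := hmono (xs k) (ys k) (us k) (q k) huloc hqloc
      have hiq : us k - q k = (us k - ubar) -
          (Submodule.orthogonalProjectionOnto (P.tangent (ys k)) (as k - ubar) : EuclideanSpace ℝ (Fin n)) - w k := by
        rw [hqdef]; simp only [sub_add_eq_sub_sub]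
      rw [hiq, inner_sub_right, inner_sub_right] at hmono'
      have hw1 : (inner ℝ (xs k - ys k) (w k) : ℝ) = δ * Dk k := by
        rw [hw, real_inner_smul_right, real_inner_self_eq_norm_mul_norm]
        have : ‖xs k - ys k‖ = Dk k := rfl
        rw [this]
        have hDne : Dk k ≠ 0 := ne_of_gt (hDpos k)
        field_simp
      have hb1 : (inner ℝ (xs k - ys k) (us k - ubar) : ℝ) ≤ Dk k * ‖us k - ubar‖ :=
        real_inner_le_norm _ _
      have hb2 : -(inner ℝ (xs k - ys k)
          ((Submodule.orthogonalProjectionOnto (P.tangent (ys k)) (as k - ubar) : EuclideanSpace ℝ (Fin n))) : ℝ) ≤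
          Dk k * ‖as k - ubar‖ := by
        have habs := abs_real_inner_le_norm (xs k - ys k)
          ((Submodule.orthogonalProjectionOnto (P.tangent (ys k)) (as k - ubar) : EuclideanSpace ℝ (Fin n)))
        have hpn := proj_norm_le (P.tangent (ys k)) (as k - ubar)
        have h3 : ‖xs k - ys k‖ = Dk k := rfl
        rw [h3] at habs
        have h4 : |(inner ℝ (xs k - ys k)
            ((Submodule.orthogonalProjectionOnto (P.tangent (ys k)) (as k - ubar) : EuclideanSpace ℝ (Fin n))) : ℝ)| ≤
            Dk k * ‖as k - ubar‖ := by
          refine le_trans habs ?_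
          exact mul_le_mul_of_nonneg_left hpn (hDpos k).le
        have h5 := neg_le_abs (inner ℝ (xs k - ys k)
            ((Submodule.orthogonalProjectionOnto (P.tangent (ys k)) (as k - ubar) : EuclideanSpace ℝ (Fin n))) : ℝ)
        linarith
      have hsq : ‖xs k - ys k‖ ^ 2 = Dk k * Dk k := by
        have h3 : ‖xs k - ys k‖ = Dk k := rfl
        rw [h3]; ring
      rw [hsq, hw1] at hmono'
      have hDk0 := hDpos k
      have hstep : δ * Dk k ≤ (‖us k - ubar‖ + ‖as k - ubar‖ + r * Dk k) * Dk k := by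
        nlinarith [hmono', hb1, hb2]
      exact le_of_mul_le_mul_right hstep hDk0
    have hlim : Tendsto (fun k => ‖us k - ubar‖ + ‖as k - ubar‖ + r * Dk k) atTop (𝓝 0) := by
      have h1 := (hun.add hasn).add (hDt.const_mul r)
      simpa using h1
    have hfin : δ ≤ 0 := ge_of_tendsto hlim hkey
    linarith
  · -- Branch 2 : separation contradiction
    rw [Filter.not_eventually] at hqev
    have hfacts : ∀ᶠ k in atTop, (ys k ∈ Wη ∧ ys k ∈ Wreg ∧ ‖ts k‖ < ρ₀) := by
      filter_upwards [hyst.eventually_mem hWη, hyst.eventually_mem hWreg, htsρ] with k h1 h2 h3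
      exact ⟨h1, h2, h3⟩
    obtain ⟨σ, hσmono, hσ⟩ := Filter.extraction_of_frequently_atTop (hqev.and_eventually hfacts)
    have hproj : ∀ j, ∃ pp ∈ A (ys (σ j)), ∀ b ∈ A (ys (σ j)),
        (inner ℝ (q (σ j) - pp) (b - pp) : ℝ) ≤ 0 := by
      intro j
      obtain ⟨hne, hcl, hcv⟩ := hreg _ (hσ j).2.2.1
      obtain ⟨pp, hppK, hppmin⟩ :=
        exists_norm_eq_iInf_of_complete_convex hne hcl.isComplete hcv (q (σ j))
      exact ⟨pp, hppK, (norm_eq_iInf_iff_real_inner_le_zero hcv hppK).1 hppmin⟩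
    choose ps hpsA hpschar using hproj
    have hψ'ne : ∀ j, q (σ j) - ps j ≠ 0 := by
      intro j h
      rw [sub_eq_zero] at h
      exact (hσ j).1 (h ▸ hpsA j)
    set ψ : ℕ → EuclideanSpace ℝ (Fin n) := fun j => ‖q (σ j) - ps j‖⁻¹ • (q (σ j) - ps j)
      with hψdef
    have hψs : ∀ j, ψ j ∈ Metric.sphere (0 : EuclideanSpace ℝ (Fin n)) 1 := by
      intro j
      rw [mem_sphere_zero_iff_norm]
      exact norm_smul_inv_norm (𝕜 := ℝ) (hψ'ne j)
    obtain ⟨ψ₀, hψ₀mem, τ, hτmono, hψt⟩ :=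
      (isCompact_sphere (0 : EuclideanSpace ℝ (Fin n)) 1).tendsto_subseq hψs
    have hψ₀n : ‖ψ₀‖ = 1 := by rwa [mem_sphere_zero_iff_norm] at hψ₀mem
    -- ψ j lies in the normal space at ys (σ j)
    have hψT : ∀ j, ψ j ∈ (P.tangent (ys (σ j)))ᗮ := by
      intro j
      apply Submodule.smul_mem
      apply mem_orthogonal_of_proj_zero
      have hη1 := hηpt (σ j) (hσ j).2.1
      have hpsc : (Submodule.orthogonalProjectionOnto (P.tangent (ys (σ j))) (ps j) : EuclideanSpace ℝ (Fin n)) =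
          η (ys (σ j)) := hη1 (ps j) (hpsA j)
      have hw0 : Submodule.orthogonalProjectionOnto (P.tangent (ys (σ j))) (w (σ j)) = 0 :=
        Submodule.orthogonalProjectionOnto_apply_of_mem_orthogonal
          (hw_orth (σ j) (hσ j).2.2.2)
      have hq1 : Submodule.orthogonalProjectionOnto (P.tangent (ys (σ j))) (q (σ j)) =
          Submodule.orthogonalProjectionOnto (P.tangent (ys (σ j))) (as (σ j)) := by
        simp only [hqdef, map_add, map_sub, hw0,
          Submodule.orthogonalProjectionOnto_mem_subspace_eq_self]
        abel
      have hq1c : (Submodule.orthogonalProjectionOnto (P.tangent (ys (σ j))) (q (σ j)) : EuclideanSpace ℝ (Fin n)) =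
          η (ys (σ j)) := by
        rw [hq1]
        exact hη1 (as (σ j)) (hasA (σ j))
      simp only [map_sub, Submodule.coe_sub, hq1c, hpsc, sub_self]
    -- limit normal vector lies in the normal space at xbar
    have htan0 : P.tangent xbar = LinearMap.range (D0 : EuclideanSpace ℝ (Fin d) →ₗ[ℝ] EuclideanSpace ℝ (Fin n)) := by
      have h := htanEq 0 P.zero_mem
      rwa [hφ0] at h
    have hψ₀T : ψ₀ ∈ (P.tangent xbar)ᗮ := by
      rw [htan0, Submodule.mem_orthogonal]
      rintro u ⟨v, rfl⟩
      have hseq0 : ∀ j, (inner ℝ (fderiv ℝ φ (ts (σ (τ j))) v) (ψ (τ j)) : ℝ) = 0 := by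
        intro j
        have hmem : fderiv ℝ φ (ts (σ (τ j))) v ∈ P.tangent (ys (σ (τ j))) := by
          rw [htanEq _ (hsubV (hts _))]
          exact ⟨v, rfl⟩
        exact (Submodule.mem_orthogonal _ _).1 (hψT (τ j)) _ hmem
      have h1 : Tendsto (fun j => ts (σ (τ j))) atTop (𝓝 0) :=
        hts0.comp ((hσmono.comp hτmono).tendsto_atTop)
      have h2 : Tendsto (fun j => fderiv ℝ φ (ts (σ (τ j)))) atTop (𝓝 D0) :=
        hCA.tendsto.comp h1
      have h3 : Tendsto (fun j => fderiv ℝ φ (ts (σ (τ j))) v) atTop (𝓝 (D0 v)) := by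
        have hcont : Continuous fun L : EuclideanSpace ℝ (Fin d) →L[ℝ] EuclideanSpace ℝ (Fin n) => L v :=
          (ContinuousLinearMap.apply ℝ (EuclideanSpace ℝ (Fin n)) v).continuous
        exact (hcont.tendsto D0).comp h2
      have h4 : Tendsto (fun j => (inner ℝ (fderiv ℝ φ (ts (σ (τ j))) v) (ψ (τ j)) : ℝ))
          atTop (𝓝 (inner ℝ (D0 v) ψ₀)) := h3.inner hψt
      have h5 : Tendsto (fun _ : ℕ => (0:ℝ)) atTop (𝓝 (inner ℝ (D0 v) ψ₀ : ℝ)) :=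
        (tendsto_congr hseq0).1 h4
      exact tendsto_nhds_unique h5 tendsto_const_nhds
    -- the point astar in the relative interior ball
    set astar : EuclideanSpace ℝ (Fin n) := ubar + ρ • ψ₀ with hastardef
    have hastarsub : astar - ubar = ρ • ψ₀ := by rw [hastardef]; abel
    have hastar : astar ∈ A xbar := by
      apply hball
      · rw [hastarsub]
        have hdir : (affineSpan ℝ (A xbar)).direction = (P.tangent xbar)ᗮ := by
          have : Lin (A xbar) = (affineSpan ℝ (A xbar)).direction := rfl
          rw [← this, ← hsharp]
          rfl
        rw [hdir]
        exact Submodule.smul_mem _ _ hψ₀T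
      · rw [hastarsub, norm_smul, Real.norm_eq_abs, abs_of_pos hρ0, hψ₀n, mul_one]
        exact min_le_left _ _
    obtain ⟨bs, hbsA, hbsT⟩ := hlscx astar hastar (fun j => ys (σ (τ j)))
      (fun j => hysM _) (hyst.comp ((hσmono.comp hτmono).tendsto_atTop))
    -- the chain of inequalities
    have hchain : ∀ j, (inner ℝ (ψ (τ j)) (bs j - ubar) : ℝ) - ‖as (σ (τ j)) - ubar‖ ≤ δ := by
      intro j
      simp only [hψdef]
      exact chain_aux (q (σ (τ j))) (ps (τ j)) (bs j) ubar
        ((Submodule.orthogonalProjectionOnto (P.tangent (ys (σ (τ j)))) (as (σ (τ j)) - ubar) :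
          EuclideanSpace ℝ (Fin n)))
        (w (σ (τ j))) δ (‖as (σ (τ j)) - ubar‖) (hpschar (τ j) (bs j) (hbsA j)) rfl
        (proj_norm_le _ _) (le_of_eq (hwnorm _)) (hψ'ne (τ j))
    -- pass to the limit
    have hlim2 : Tendsto (fun j => (inner ℝ (ψ (τ j)) (bs j - ubar) : ℝ) - ‖as (σ (τ j)) - ubar‖)
        atTop (𝓝 ρ) := by
      have t1 : Tendsto (fun j => (inner ℝ (ψ (τ j)) (bs j - ubar) : ℝ)) atTop
          (𝓝 (inner ℝ ψ₀ (astar - ubar))) := hψt.inner (hbsT.sub tendsto_const_nhds)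
      have t2 : Tendsto (fun j => ‖as (σ (τ j)) - ubar‖) atTop (𝓝 0) :=
        hasn.comp ((hσmono.comp hτmono).tendsto_atTop)
      have h5 : (inner ℝ ψ₀ (astar - ubar) : ℝ) = ρ := by
        rw [hastarsub, real_inner_smul_right, real_inner_self_eq_norm_mul_norm, hψ₀n]
        ring
      have h6 := t1.sub t2
      rw [h5, sub_zero] at h6
      exact h6
    have hδρ : δ < ρ := by rw [hδdef]; exact half_lt_self hρ0
    have hev4 := hlim2.eventually_const_lt hδρ
    obtain ⟨j, hj⟩ := hev4.exists
    exact absurd (hchain j) (not_le.2 hj)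

/-- under non-degeneracy, `x̄ + γū` is interior to the local union. -/
theorem mem_interior_localUnion {n d : ℕ} {p : ℕ∞} (hp : 1 ≤ p)
    (A : EuclideanSpace ℝ (Fin n) → Set (EuclideanSpace ℝ (Fin n))) (M : Set (EuclideanSpace ℝ (Fin n))) (xbar ubar : EuclideanSpace ℝ (Fin n))
    (P : CpPatch p (EuclideanSpace ℝ (Fin d)) M xbar)
    (hA : PartlySmoothAt A M xbar P)
    (hubar : ubar ∈ A xbar) (r ε₀ : ℝ)
    (hreg : ResolventRegular A xbar ubar r ε₀)
    (hri : ubar ∈ intrinsicInterior ℝ (A xbar)) :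
    ∀ γ : ℝ, 0 < γ → γ < 1 / r → ∃ εbar > 0, ∀ ε : ℝ, 0 < ε → ε < εbar →
      xbar + γ • ubar ∈ interior (LocalUnion A M xbar ubar γ ε) := by
  obtain ⟨hr, hε₀, hmono, hres⟩ := hreg
  intro γ hγ0 hγr
  obtain ⟨ζ, hζ0, hζ⟩ := identification hp A M xbar ubar P hA hubar r ε₀ hr hε₀ hmono hri
  obtain ⟨W, hW, J, hJc, hJ⟩ := hres γ hγ0 hγr
  have hzW : xbar + γ • ubar ∈ W := mem_of_mem_nhds hW
  have hJz : J (xbar + γ • ubar) = xbar := by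
    have := (hJ _ hzW xbar).1 ⟨ubar, by simp only [Locz, sub_self, norm_zero, if_pos hε₀]; exact ⟨hubar, by simpa using hε₀⟩, rfl⟩
    exact this.symm
  refine ⟨ε₀, hε₀, fun ε hε hεε₀ => ?_⟩
  set m := min ε ζ with hm
  have hm0 : 0 < m := lt_min hε hζ0
  -- the open set
  set S : Set (EuclideanSpace ℝ (Fin n)) :=
    interior W ∩ (fun z => (J z, γ⁻¹ • (z - J z))) ⁻¹'
      (Metric.ball xbar m ×ˢ Metric.ball ubar m) with hS
  have hSopen : IsOpen S := by
    have hc : ContinuousOn (fun z => (J z, γ⁻¹ • (z - J z))) (interior W) := by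
      have h1 : ContinuousOn J (interior W) := hJc.mono interior_subset
      exact h1.prodMk (by exact (continuousOn_id.sub h1).const_smul γ⁻¹)
    rw [hS]
    exact hc.isOpen_inter_preimage isOpen_interior
      ((Metric.isOpen_ball).prod Metric.isOpen_ball)
  have hzS : xbar + γ • ubar ∈ S := by
    constructor
    · rw [mem_interior_iff_mem_nhds]; exact hW
    · simp only [mem_preimage, hJz, mem_prod, Metric.mem_ball, dist_eq_norm]
      constructor
      · simpa using hm0
      · have : (xbar + γ • ubar - xbar) = γ • ubar := by abel
        rw [this, smul_smul, inv_mul_cancel₀ (ne_of_gt hγ0), one_smul]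
        simpa using hm0
  refine mem_interior.2 ⟨S, fun z hz => ?_, hSopen, hzS⟩
  -- S ⊆ LocalUnion
  obtain ⟨hzint, hzpre⟩ := hz
  have hzW' : z ∈ W := interior_subset hzint
  simp only [mem_preimage, mem_prod, Metric.mem_ball, dist_eq_norm] at hzpre
  obtain ⟨hx, hu⟩ := hzpre
  set x := J z with hxdef
  obtain ⟨u', hu', hzu'⟩ := (hJ z hzW' x).2 rfl
  have hloc : ‖x - xbar‖ < ε₀ := by
    by_contra h
    simp [Locz, h] at hu'
  have huA : u' ∈ A x := by
    simp only [Locz, if_pos hloc, mem_setOf_eq] at hu'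
    exact hu'.1
  have hu'eq : u' = γ⁻¹ • (z - x) := by
    rw [hzu']
    have h2 : x + γ • u' - x = γ • u' := by abel
    rw [h2, smul_smul, inv_mul_cancel₀ (ne_of_gt hγ0), one_smul]
  have hxM : x ∈ M := hζ x u' huA (lt_of_lt_of_le hx (min_le_right _ _))
    (by rw [hu'eq]; exact lt_of_lt_of_le hu (min_le_right _ _))
  refine ⟨x, hxM, lt_of_lt_of_le hx (min_le_left _ _), u', ?_, hzu'⟩
  have hxε : ‖x - xbar‖ < ε := lt_of_lt_of_le hx (min_le_left _ _)
  simp only [Locz, if_pos hxε, mem_setOf_eq]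
  exact ⟨huA, by rw [hu'eq]; exact lt_of_lt_of_le hu (min_le_left _ _)⟩

end
end

section
/- Let M₁ and M₂ be manifolds in ℝⁿ given by C^p patches through the same point x̄, and let A : ℝⁿ → Set ℝⁿ be partly smooth at x̄ relative to M₁ and also partly smooth at x̄ relative to M₂. Assume A is r-resolvent-regular at x̄ for some ū ∈ A(x̄) satisfying the strong inclusion ū ∈ ri(A(x̄)). Then there is an open neighborhood W of x̄ such that M₁ ∩ W = M₂ ∩ W. -/
open Filter Topology Set RealInnerProductSpace

noncomputable section

lemma mem_locz_iff {E : Type*} [NormedAddCommGroup E] [InnerProductSpace ℝ E]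
    {A : E → Set E} {xbar ubar : E} {ε : ℝ} {x u : E} :
    u ∈ Locz A xbar ubar ε x ↔ ‖x - xbar‖ < ε ∧ u ∈ A x ∧ ‖u - ubar‖ < ε := by
  unfold Locz
  split_ifs with h
  · simp [h, Set.mem_setOf_eq, and_assoc]
  · simp [h]

lemma line_mem_of_intrinsicInterior {E : Type*} [NormedAddCommGroup E]
    [NormedSpace ℝ E] {S : Set E} {u : E}
    (hu : u ∈ intrinsicInterior ℝ S) {w : E}
    (hw : w ∈ (affineSpan ℝ S).direction) :
    ∃ δ : ℝ, 0 < δ ∧ ∀ t : ℝ, |t| < δ → u + t • w ∈ S := by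
  obtain ⟨y, hy, hyu⟩ := mem_intrinsicInterior.1 hu
  have humem : u ∈ affineSpan ℝ S := hyu ▸ y.2
  have hline : ∀ t : ℝ, u + t • w ∈ affineSpan ℝ S := by
    intro t
    have := AffineSubspace.vadd_mem_of_mem_direction
      (Submodule.smul_mem _ t hw) humem
    simpa [vadd_eq_add, add_comm] using this
  set c : ℝ → affineSpan ℝ S := fun t => ⟨u + t • w, hline t⟩ with hc
  have hcont : Continuous c := by
    apply Continuous.subtype_mk
    exact continuous_const.add (continuous_id.smul continuous_const)
  have h0 : c 0 ∈ interior ((Subtype.val) ⁻¹' S : Set (affineSpan ℝ S)) := by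
    have : c 0 = y := Subtype.ext (by simp [hc, hyu])
    rw [this]; exact hy
  have hopen : IsOpen (c ⁻¹' interior ((Subtype.val) ⁻¹' S)) :=
    isOpen_interior.preimage hcont
  obtain ⟨δ, hδ, hball⟩ := Metric.isOpen_iff.1 hopen 0 h0
  refine ⟨δ, hδ, fun t ht => ?_⟩
  have ht' : t ∈ Metric.ball (0:ℝ) δ := by simpa [Real.dist_eq] using ht
  have := interior_subset (hball ht')
  simpa [hc] using this

set_option maxHeartbeats 1000000 in
lemma identification_s11 {n d : ℕ} {p : ℕ∞} (hp : 1 ≤ p)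
    {A : EuclideanSpace ℝ (Fin n) → Set (EuclideanSpace ℝ (Fin n))}
    {M : Set (EuclideanSpace ℝ (Fin n))} {xbar : EuclideanSpace ℝ (Fin n)}
    (P : CpPatch p (EuclideanSpace ℝ (Fin d)) M xbar)
    {ubar : EuclideanSpace ℝ (Fin n)} (hmem : ubar ∈ A xbar)
    (hri : ubar ∈ intrinsicInterior ℝ (A xbar))
    (hnormal : P.normal xbar = Lin (A xbar))
    (hlsc : LowerSCAlongAt A M xbar)
    {r ε γ : ℝ} (hr : 0 < r) (hε : 0 < ε) (hγ : 0 < γ)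
    (hmono : ∀ x y u v : EuclideanSpace ℝ (Fin n),
      u ∈ Locz A xbar ubar ε x → v ∈ Locz A xbar ubar ε y →
      (inner ℝ (x - y) (u - v) : ℝ) ≥ -r * ‖x - y‖ ^ 2)
    {W : Set (EuclideanSpace ℝ (Fin n))} (hW : W ∈ 𝓝 (xbar + γ • ubar))
    {J : EuclideanSpace ℝ (Fin n) → EuclideanSpace ℝ (Fin n)}
    (hJ : ContinuousOn J W)
    (hiff : ∀ z ∈ W, ∀ x, (∃ u ∈ Locz A xbar ubar ε x, z = x + γ • u) ↔ x = J z) :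
    ∀ᶠ z in 𝓝 (xbar + γ • ubar), J z ∈ M := by
  have hp' : (1 : WithTop ℕ∞) ≤ (p : WithTop ℕ∞) := by exact_mod_cast hp
  set c := xbar + γ • ubar with hcdef
  by_contra hcon
  have hz_ex : ∀ k : ℕ, ∃ z, z ∈ Metric.ball c (1/(k+1)) ∩ W ∧ J z ∉ M := by
    intro k
    by_contra hk
    push_neg at hk
    exact hcon (Filter.mem_of_superset
      (Filter.inter_mem (Metric.ball_mem_nhds c (by positivity)) hW)
      (fun z hz => hk z hz))
  choose z hzb hzM using hz_ex
  have hzW : ∀ k, z k ∈ W := fun k => (hzb k).2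
  have hz_tendsto : Tendsto z atTop (𝓝 c) := by
    rw [tendsto_iff_dist_tendsto_zero]
    exact squeeze_zero (fun k => dist_nonneg)
      (fun k => le_of_lt (Metric.mem_ball.1 (hzb k).1))
      tendsto_one_div_add_atTop_nhds_zero_nat
  have hcW : c ∈ W := mem_of_mem_nhds hW
  have hubar_loc : ubar ∈ Locz A xbar ubar ε xbar :=
    mem_locz_iff.2 ⟨by simpa using hε, hmem, by simpa using hε⟩
  have hJc : J c = xbar := ((hiff c hcW xbar).1 ⟨ubar, hubar_loc, rfl⟩).symm
  set x := fun k => J (z k) with hxdef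
  have hx_tendsto : Tendsto x atTop (𝓝 xbar) := by
    have := (hJ.continuousAt hW).tendsto.comp hz_tendsto
    rwa [hJc] at this
  have hxM : ∀ k, x k ∉ M := hzM
  have hu_ex : ∀ k, ∃ u ∈ Locz A xbar ubar ε (x k), z k = x k + γ • u :=
    fun k => (hiff (z k) (hzW k) (x k)).2 rfl
  choose u hu_loc hu_eq using hu_ex
  have hu_form : ∀ k, u k = γ⁻¹ • (z k - x k) := by
    intro k
    have h1 : z k - x k = γ • u k := by rw [hu_eq k]; abel
    rw [h1, smul_smul, inv_mul_cancel₀ hγ.ne', one_smul]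
  have hu_tendsto : Tendsto u atTop (𝓝 ubar) := by
    have h1 : Tendsto (fun k => γ⁻¹ • (z k - x k)) atTop (𝓝 (γ⁻¹ • (c - xbar))) :=
      (hz_tendsto.sub hx_tendsto).const_smul γ⁻¹
    have h2 : γ⁻¹ • (c - xbar) = ubar := by
      rw [hcdef]
      rw [show xbar + γ • ubar - xbar = γ • ubar by abel]
      rw [smul_smul, inv_mul_cancel₀ hγ.ne', one_smul]
    rw [h2] at h1
    exact h1.congr (fun k => (hu_form k).symm)
  -- compact piece of the patch
  obtain ⟨ρ, hρ, hKV⟩ : ∃ ρ > 0, Metric.closedBall (0:EuclideanSpace ℝ (Fin d)) ρ ⊆ P.V := by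
    obtain ⟨ρ', hρ', hb⟩ := Metric.isOpen_iff.1 P.isOpen_V 0 P.zero_mem
    exact ⟨ρ'/2, by positivity, (Metric.closedBall_subset_ball (by linarith)).trans hb⟩
  set K := Metric.closedBall (0:EuclideanSpace ℝ (Fin d)) ρ with hKdef
  have hKc : IsCompact K := isCompact_closedBall _ _
  have hφcont : ContinuousOn P.toFun P.V := P.contDiffOn.continuousOn
  have hCc : IsCompact (P.toFun '' K) := hKc.image_of_continuousOn (hφcont.mono hKV)
  have hxbarC : xbar ∈ P.toFun '' K := ⟨0, Metric.mem_closedBall_self hρ.le, P.map_zero⟩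
  have hCM : P.toFun '' K ⊆ M := by
    intro a ha
    have h2 : a ∈ P.toFun '' P.V := Set.image_mono hKV ha
    rwa [← P.image_eq] at h2
  -- nearest points
  have hyex : ∀ k, ∃ y ∈ P.toFun '' K, Metric.infDist (x k) (P.toFun '' K) = dist (x k) y :=
    fun k => hCc.exists_infDist_eq_dist ⟨xbar, hxbarC⟩ (x k)
  choose y hyC hyd using hyex
  have hymin : ∀ k, ∀ y' ∈ P.toFun '' K, dist (x k) (y k) ≤ dist (x k) y' := by
    intro k y' hy'
    rw [← hyd k]
    exact Metric.infDist_le_dist_of_mem hy'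
  have hd_tendsto : Tendsto (fun k => dist (x k) (y k)) atTop (𝓝 0) :=
    squeeze_zero (fun k => dist_nonneg) (fun k => hymin k xbar hxbarC)
      (tendsto_iff_dist_tendsto_zero.1 hx_tendsto)
  have hy_tendsto : Tendsto y atTop (𝓝 xbar) := by
    rw [tendsto_iff_dist_tendsto_zero]
    have hsum : Tendsto (fun k => dist (x k) (y k) + dist (x k) xbar) atTop (𝓝 0) := by
      have := hd_tendsto.add (tendsto_iff_dist_tendsto_zero.1 hx_tendsto)
      rwa [add_zero] at this
    refine squeeze_zero (fun k => dist_nonneg) (fun k => ?_) hsum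
    calc dist (y k) xbar ≤ dist (y k) (x k) + dist (x k) xbar := dist_triangle _ _ _
      _ = dist (x k) (y k) + dist (x k) xbar := by rw [dist_comm]
  have hdpos : ∀ k, 0 < dist (x k) (y k) :=
    fun k => dist_pos.2 (fun h => hxM k (h ▸ hCM (hyC k)))
  have ht_ex : ∀ k, ∃ t ∈ K, P.toFun t = y k := fun k => (hyC k).imp (fun t ht => ⟨ht.1, ht.2⟩)
  choose t htK htφ using ht_ex
  set w := fun k => (dist (x k) (y k))⁻¹ • (x k - y k) with hwdef
  have hwnorm : ∀ k, ‖w k‖ = 1 := by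
    intro k
    rw [hwdef]
    simp only [norm_smul, Real.norm_eq_abs, abs_of_pos (inv_pos.2 (hdpos k))]
    rw [← dist_eq_norm, inv_mul_cancel₀ (hdpos k).ne']
  -- subsequences
  obtain ⟨tlim, htlimK, σ₁, hσ₁, htlim⟩ := hKc.tendsto_subseq htK
  have hwball : ∀ k, w (σ₁ k) ∈ Metric.closedBall (0:EuclideanSpace ℝ (Fin n)) 1 := by
    intro k
    rw [Metric.mem_closedBall, dist_zero_right, hwnorm]
  obtain ⟨wlim, hwlimb, σ₂, hσ₂, hwlim⟩ :=
    (isCompact_closedBall (0:EuclideanSpace ℝ (Fin n)) 1).tendsto_subseq hwball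
  set τ := σ₁ ∘ σ₂ with hτdef
  have hτmono : StrictMono τ := hσ₁.comp hσ₂
  have htτ : Tendsto (fun k => t (τ k)) atTop (𝓝 tlim) := htlim.comp hσ₂.tendsto_atTop
  have hwτ : Tendsto (fun k => w (τ k)) atTop (𝓝 wlim) := hwlim
  have hyτ : Tendsto (fun k => y (τ k)) atTop (𝓝 xbar) := hy_tendsto.comp hτmono.tendsto_atTop
  -- tlim = 0
  have hφtlim : P.toFun tlim = xbar := by
    have hcw : ContinuousWithinAt P.toFun K tlim :=
      (hφcont.mono hKV).continuousWithinAt htlimK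
    have h1 : Tendsto (fun k => P.toFun (t (τ k))) atTop (𝓝 (P.toFun tlim)) :=
      hcw.tendsto.comp (tendsto_nhdsWithin_of_tendsto_nhds_of_eventually_within _ htτ
        (Eventually.of_forall (fun k => htK (τ k))))
    have h2 : Tendsto (fun k => y (τ k)) atTop (𝓝 (P.toFun tlim)) :=
      h1.congr (fun k => htφ (τ k))
    exact tendsto_nhds_unique h2 hyτ
  have ht0 : tlim = 0 := P.injOn (hKV htlimK) P.zero_mem (by rw [hφtlim, P.map_zero])
  -- derivative continuity
  have hDcont : ContinuousOn (fderiv ℝ P.toFun) P.V :=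
    P.contDiffOn.continuousOn_fderiv_of_isOpen P.isOpen_V hp'
  have hD0 : Tendsto (fun k => fderiv ℝ P.toFun (t (τ k))) atTop
      (𝓝 (fderiv ℝ P.toFun 0)) := by
    have h1 := (hDcont.continuousAt (P.isOpen_V.mem_nhds P.zero_mem)).tendsto
    rw [ht0] at htτ
    exact h1.comp htτ
  -- orthogonality at finite stage
  have hperp : ∀ᶠ k in atTop, ∀ s, ⟪x (τ k) - y (τ k), (fderiv ℝ P.toFun (t (τ k))) s⟫ = 0 := by
    have hball : ∀ᶠ k in atTop, t (τ k) ∈ Metric.ball (0:EuclideanSpace ℝ (Fin d)) ρ := by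
      rw [ht0] at htτ
      exact htτ (Metric.ball_mem_nhds _ hρ)
    filter_upwards [hball] with k hk
    have hdiff : HasFDerivAt P.toFun (fderiv ℝ P.toFun (t (τ k))) (t (τ k)) :=
      ((P.contDiffOn.differentiableOn (lt_of_lt_of_le zero_lt_one hp').ne').differentiableAt
        (P.isOpen_V.mem_nhds (hKV (htK (τ k))))).hasFDerivAt
    set D := fderiv ℝ P.toFun (t (τ k)) with hDdef
    set g : EuclideanSpace ℝ (Fin d) → EuclideanSpace ℝ (Fin n) :=
      fun s => x (τ k) - P.toFun s with hgdef
    have hg : HasFDerivAt g (-D) (t (τ k)) := by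
      have := (hasFDerivAt_const (x (τ k)) (t (τ k))).sub hdiff
      rw [zero_sub] at this
      exact this
    have hfmin : IsLocalMin (fun s => (⟪g s, g s⟫ : ℝ)) (t (τ k)) := by
      have hKnhds : K ∈ 𝓝 (t (τ k)) :=
        Filter.mem_of_superset (Metric.isOpen_ball.mem_nhds hk) Metric.ball_subset_closedBall
      refine Filter.eventually_of_mem hKnhds (fun s hs => ?_)
      dsimp only
      have h1 : dist (x (τ k)) (y (τ k)) ≤ dist (x (τ k)) (P.toFun s) :=
        hymin (τ k) _ ⟨s, hs, rfl⟩
      rw [real_inner_self_eq_norm_sq, real_inner_self_eq_norm_sq]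
      have h2 : ‖g (t (τ k))‖ = dist (x (τ k)) (y (τ k)) := by
        rw [hgdef]; simp only [htφ (τ k)]; rw [dist_eq_norm]
      have h3 : ‖g s‖ = dist (x (τ k)) (P.toFun s) := by rw [hgdef, dist_eq_norm]
      rw [h2, h3]
      exact pow_le_pow_left₀ dist_nonneg h1 2
    have hinner : HasFDerivAt (fun s => (⟪g s, g s⟫ : ℝ))
        ((fderivInnerCLM ℝ (g (t (τ k)), g (t (τ k)))).comp ((-D).prod (-D))) (t (τ k)) :=
      HasFDerivAt.inner ℝ hg hg
    have hzero := hfmin.hasFDerivAt_eq_zero hinner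
    intro s
    have hev := DFunLike.congr_fun hzero s
    simp only [ContinuousLinearMap.comp_apply, ContinuousLinearMap.prod_apply,
      fderivInnerCLM_apply, ContinuousLinearMap.neg_apply, ContinuousLinearMap.zero_apply,
      inner_neg_right, inner_neg_left] at hev
    have hgt : g (t (τ k)) = x (τ k) - y (τ k) := by
      rw [hgdef]; simp only [htφ (τ k)]
    rw [hgt] at hev
    have hcomm : ⟪D s, x (τ k) - y (τ k)⟫ = ⟪x (τ k) - y (τ k), D s⟫ := real_inner_comm _ _
    linarith [hev, hcomm.symm ▸ hev]
  -- limit orthogonality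
  have hwlimperp : ∀ s, ⟪wlim, (fderiv ℝ P.toFun 0) s⟫ = 0 := by
    intro s
    have hDs : Tendsto (fun k => (fderiv ℝ P.toFun (t (τ k))) s) atTop
        (𝓝 ((fderiv ℝ P.toFun 0) s)) :=
      ((ContinuousLinearMap.apply ℝ _ s).continuous.tendsto _).comp hD0
    have hlim : Tendsto (fun k => (⟪w (τ k), (fderiv ℝ P.toFun (t (τ k))) s⟫ : ℝ)) atTop
        (𝓝 ⟪wlim, (fderiv ℝ P.toFun 0) s⟫) := hwτ.inner hDs
    have h0' : Tendsto (fun k => (⟪w (τ k), (fderiv ℝ P.toFun (t (τ k))) s⟫ : ℝ)) atTop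
        (𝓝 0) := by
      refine Tendsto.congr' ?_ (tendsto_const_nhds : Tendsto (fun _ : ℕ => (0:ℝ)) atTop (𝓝 0))
      filter_upwards [hperp] with k hk
      rw [hwdef]
      simp only
      rw [real_inner_smul_left, hk s, mul_zero]
    exact tendsto_nhds_unique hlim h0'
  have hwlimnorm : ‖wlim‖ = 1 := by
    have h1 : Tendsto (fun k => ‖w (τ k)‖) atTop (𝓝 ‖wlim‖) := hwτ.norm
    have h2 : Tendsto (fun k => ‖w (τ k)‖) atTop (𝓝 1) := by
      simp only [hwnorm]; exact tendsto_const_nhds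
    exact tendsto_nhds_unique h1 h2
  -- wlim in Lin (A xbar)
  have hinvF : Function.invFunOn P.toFun P.V xbar = 0 := by
    have hex : ∃ t ∈ P.V, P.toFun t = xbar := ⟨0, P.zero_mem, P.map_zero⟩
    exact P.injOn (Function.invFunOn_mem hex) P.zero_mem
      ((Function.invFunOn_eq hex).trans P.map_zero.symm)
  have hwlimLin : wlim ∈ Lin (A xbar) := by
    rw [← hnormal]
    simp only [CpPatch.normal, CpPatch.tangent, hinvF]
    rw [Submodule.mem_orthogonal]
    rintro v hv
    obtain ⟨s, rfl⟩ := LinearMap.mem_range.1 hv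
    rw [real_inner_comm]
    exact hwlimperp s
  -- the shifted point
  obtain ⟨δ0, hδ0, hδline⟩ := line_mem_of_intrinsicInterior hri hwlimLin
  set δ := min (δ0/2) (ε/2) with hδdef
  have hδpos : 0 < δ := lt_min (by linarith) (by linarith)
  have hδε : δ ≤ ε/2 := min_le_right _ _
  have hu' : ubar + δ • wlim ∈ A xbar := by
    refine hδline δ ?_
    rw [abs_of_pos hδpos]
    calc δ ≤ δ0/2 := min_le_left _ _
      _ < δ0 := by linarith
  -- lower semicontinuity selection
  obtain ⟨v, hvA, hv_tendsto⟩ := hlsc (ubar + δ • wlim) hu' (fun k => y (τ k))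
    (fun k => hCM (hyC (τ k))) hyτ
  -- eventual facts
  have hvloc : ∀ᶠ k in atTop, v k ∈ Locz A xbar ubar ε (y (τ k)) := by
    have h1 : ∀ᶠ k in atTop, y (τ k) ∈ Metric.ball xbar ε := hyτ (Metric.ball_mem_nhds _ hε)
    have h2 : ∀ᶠ k in atTop, v k ∈ Metric.ball ubar ε := by
      refine hv_tendsto (Metric.isOpen_ball.mem_nhds ?_)
      rw [Metric.mem_ball, dist_eq_norm]
      rw [show ubar + δ • wlim - ubar = δ • wlim by abel]
      rw [norm_smul, Real.norm_eq_abs, abs_of_pos hδpos, hwlimnorm, mul_one]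
      linarith
    filter_upwards [h1, h2] with k hk1 hk2
    refine mem_locz_iff.2 ⟨?_, hvA k, ?_⟩
    · rw [← dist_eq_norm]; exact Metric.mem_ball.1 hk1
    · rw [← dist_eq_norm]; exact Metric.mem_ball.1 hk2
  -- key inequality
  have hkey : ∀ᶠ k in atTop,
      -r * dist (x (τ k)) (y (τ k)) ≤ (⟪w (τ k), u (τ k) - v k⟫ : ℝ) := by
    filter_upwards [hvloc] with k hk
    have hineq := hmono (x (τ k)) (y (τ k)) (u (τ k)) (v k) (hu_loc (τ k)) hk
    have hdk : 0 < dist (x (τ k)) (y (τ k)) := hdpos (τ k)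
    have hxy : x (τ k) - y (τ k) = dist (x (τ k)) (y (τ k)) • w (τ k) := by
      rw [hwdef]
      simp only
      rw [smul_smul, mul_inv_cancel₀ hdk.ne', one_smul]
    rw [hxy, real_inner_smul_left] at hineq
    have hn : ‖dist (x (τ k)) (y (τ k)) • w (τ k)‖ = dist (x (τ k)) (y (τ k)) := by
      rw [norm_smul, Real.norm_eq_abs, abs_of_pos hdk, hwnorm, mul_one]
    rw [hn] at hineq
    nlinarith [hineq, hdk]
  -- take limits
  have hL1 : Tendsto (fun k => (⟪w (τ k), u (τ k) - v k⟫ : ℝ)) atTop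
      (𝓝 ⟪wlim, ubar - (ubar + δ • wlim)⟫) :=
    hwτ.inner ((hu_tendsto.comp hτmono.tendsto_atTop).sub hv_tendsto)
  have hL2 : Tendsto (fun k => -r * dist (x (τ k)) (y (τ k))) atTop (𝓝 (-r * 0)) :=
    (hd_tendsto.comp hτmono.tendsto_atTop).const_mul (-r)
  have hfinal : -r * 0 ≤ (⟪wlim, ubar - (ubar + δ • wlim)⟫ : ℝ) :=
    le_of_tendsto_of_tendsto hL2 hL1 hkey
  have hcomp : (⟪wlim, ubar - (ubar + δ • wlim)⟫ : ℝ) = -δ := by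
    rw [show ubar - (ubar + δ • wlim) = -(δ • wlim) by abel]
    rw [inner_neg_right, real_inner_smul_right, real_inner_self_eq_norm_sq, hwlimnorm]
    ring
  rw [hcomp] at hfinal
  linarith

/-- uniqueness of the active manifold. -/
theorem active_manifold_unique {n d₁ d₂ : ℕ} {p : ℕ∞} (hp : 1 ≤ p)
    (A : EuclideanSpace ℝ (Fin n) → Set (EuclideanSpace ℝ (Fin n))) (M₁ M₂ : Set (EuclideanSpace ℝ (Fin n))) (xbar : EuclideanSpace ℝ (Fin n))
    (P₁ : CpPatch p (EuclideanSpace ℝ (Fin d₁)) M₁ xbar)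
    (P₂ : CpPatch p (EuclideanSpace ℝ (Fin d₂)) M₂ xbar)
    (hA₁ : PartlySmoothAt A M₁ xbar P₁) (hA₂ : PartlySmoothAt A M₂ xbar P₂)
    (ubar : EuclideanSpace ℝ (Fin n)) (hmem : ubar ∈ A xbar)
    (hri : ubar ∈ intrinsicInterior ℝ (A xbar))
    (r ε₀ : ℝ) (hreg : ResolventRegular A xbar ubar r ε₀) :
    ∃ W : Set (EuclideanSpace ℝ (Fin n)), IsOpen W ∧ xbar ∈ W ∧ M₁ ∩ W = M₂ ∩ W := by
  obtain ⟨hr, hε, hmono, hres⟩ := hreg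
  set γ := (2*r)⁻¹ with hγdef
  have hγpos : 0 < γ := by positivity
  have hγlt : γ < 1/r := by
    rw [hγdef, one_div]
    exact inv_strictAnti₀ hr (by linarith)
  obtain ⟨W₀, hW₀, J, hJ, hiff⟩ := hres γ hγpos hγlt
  have hx1 : xbar ∈ M₁ := by
    have h : xbar ∈ P₁.toFun '' P₁.V := ⟨0, P₁.zero_mem, P₁.map_zero⟩
    rwa [← P₁.image_eq] at h
  have hx2 : xbar ∈ M₂ := by
    have h : xbar ∈ P₂.toFun '' P₂.V := ⟨0, P₂.zero_mem, P₂.map_zero⟩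
    rwa [← P₂.image_eq] at h
  obtain ⟨W₁, hW₁n, hW₁⟩ := hA₁.2.2.2.2
  obtain ⟨W₂, hW₂n, hW₂⟩ := hA₂.2.2.2.2
  have hlsc1 : LowerSCAlongAt A M₁ xbar := hW₁ xbar ⟨hx1, mem_of_mem_nhds hW₁n⟩
  have hlsc2 : LowerSCAlongAt A M₂ xbar := hW₂ xbar ⟨hx2, mem_of_mem_nhds hW₂n⟩
  have hid1 := identification_s11 hp P₁ hmem hri hA₁.2.2.1 hlsc1 hr hε hγpos hmono hW₀ hJ hiff
  have hid2 := identification_s11 hp P₂ hmem hri hA₂.2.2.1 hlsc2 hr hε hγpos hmono hW₀ hJ hiff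
  have key : ∀ (M M' : Set (EuclideanSpace ℝ (Fin n))), LowerSCAlongAt A M xbar →
      (∀ᶠ z in 𝓝 (xbar + γ • ubar), J z ∈ M') →
      ∃ ρ > 0, ∀ x ∈ M ∩ Metric.ball xbar ρ, x ∈ M' := by
    intro M M' hlsc hid
    by_contra hcontra
    push_neg at hcontra
    have hex : ∀ k : ℕ, ∃ x, x ∈ M ∩ Metric.ball xbar (1/(k+1)) ∧ x ∉ M' := by
      intro k
      obtain ⟨x, hx, hx'⟩ := hcontra (1/(k+1)) (by positivity)
      exact ⟨x, hx, hx'⟩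
    choose xs hxs hxs' using hex
    have hxsM : ∀ k, xs k ∈ M := fun k => (hxs k).1
    have hxs_tendsto : Tendsto xs atTop (𝓝 xbar) := by
      rw [tendsto_iff_dist_tendsto_zero]
      exact squeeze_zero (fun k => dist_nonneg)
        (fun k => le_of_lt (Metric.mem_ball.1 (hxs k).2))
        tendsto_one_div_add_atTop_nhds_zero_nat
    obtain ⟨v, hvA, hv_tendsto⟩ := hlsc ubar hmem xs hxsM hxs_tendsto
    set zs := fun k => xs k + γ • v k with hzsdef
    have hzs : Tendsto zs atTop (𝓝 (xbar + γ • ubar)) :=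
      hxs_tendsto.add (hv_tendsto.const_smul γ)
    have h1 : ∀ᶠ k in atTop, zs k ∈ W₀ := hzs hW₀
    have h2 : ∀ᶠ k in atTop, J (zs k) ∈ M' := hzs hid
    have h3 : ∀ᶠ k in atTop, ‖xs k - xbar‖ < ε₀ := by
      have := hxs_tendsto (Metric.ball_mem_nhds xbar hε)
      filter_upwards [this] with k hk
      rw [← dist_eq_norm]; exact Metric.mem_ball.1 hk
    have h4 : ∀ᶠ k in atTop, ‖v k - ubar‖ < ε₀ := by
      have := hv_tendsto (Metric.ball_mem_nhds ubar hε)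
      filter_upwards [this] with k hk
      rw [← dist_eq_norm]; exact Metric.mem_ball.1 hk
    obtain ⟨k, hk1, hk2, hk3, hk4⟩ := (h1.and (h2.and (h3.and h4))).exists
    have hloc : v k ∈ Locz A xbar ubar ε₀ (xs k) := mem_locz_iff.2 ⟨hk3, hvA k, hk4⟩
    have hJz : xs k = J (zs k) := (hiff (zs k) hk1 (xs k)).1 ⟨v k, hloc, rfl⟩
    exact hxs' k (by rw [hJz]; exact hk2)
  obtain ⟨ρ₁, hρ₁, hsub₁⟩ := key M₁ M₂ hlsc1 hid2
  obtain ⟨ρ₂, hρ₂, hsub₂⟩ := key M₂ M₁ hlsc2 hid1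
  refine ⟨Metric.ball xbar (min ρ₁ ρ₂), Metric.isOpen_ball,
    Metric.mem_ball_self (lt_min hρ₁ hρ₂), ?_⟩
  ext a
  simp only [Set.mem_inter_iff]
  constructor
  · rintro ⟨haM, hab⟩
    exact ⟨hsub₁ a ⟨haM, Metric.ball_subset_ball (min_le_left _ _) hab⟩, hab⟩
  · rintro ⟨haM, hab⟩
    exact ⟨hsub₂ a ⟨haM, Metric.ball_subset_ball (min_le_right _ _) hab⟩, hab⟩

end
end
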